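/- If m is a standard Young tableau, i an index with |d_i(m)| ≥ 2, and g_i(m) the standard tableau obtained by swapping i and i+1, then d_i(g_i(m)) = −d_i(m), d_{i−1}(g_i(m)) = d_{i−1}(m) + d_i(m), d_{i+1}(g_i(m)) = d_i(m) + d_{i+1}(m), and d_j(g_i(m)) = d_j(m) for all j with |j − i| ≥ 2. -/
import Mathlib


open Finset
open scoped Classical

/-- A filling `pos : Fin n → ℕ × ℕ` (the cell, as `(row, column)`, containing entry `k+1`)
is a standard Young tableau iff it is injective and every prefix of cells forms a
Young diagram. -/
def IsSYTFun (n : ℕ) (pos : Fin n → ℕ × ℕ) : Prop :=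
  Function.Injective pos ∧
    ∀ k : Fin n, ∃ Y : YoungDiagram,
      Y.cells = (Finset.univ.filter (fun j => j ≤ k)).image pos

/-- A standard Young tableau with `n` boxes. -/
structure SYT (n : ℕ) where
  pos : Fin n → ℕ × ℕ
  isSYT : IsSYTFun n pos

/-- The content (column minus row) of a cell. -/
def cellContent (p : ℕ × ℕ) : ℤ := (p.2 : ℤ) - (p.1 : ℤ)

/-- The axial distance `d_i(m)` between the entries `i` and `i+1` of `m`
(content of the cell of `i+1` minus content of the cell of `i`); `0` when `i`
is out of range. -/
def SYT.d {n : ℕ} (m : SYT n) (i : ℕ) : ℤ :=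
  if h : 0 < i ∧ i < n then
    cellContent (m.pos ⟨i, h.2⟩) -
      cellContent (m.pos ⟨i - 1, Nat.lt_of_le_of_lt (Nat.sub_le i 1) h.2⟩)
  else 0

/-- The shape of a standard Young tableau, as a finite set of cells. -/
def SYT.shape {n : ℕ} (m : SYT n) : Finset (ℕ × ℕ) := Finset.univ.image m.pos

/-- `g_i(m)`: the tableau obtained from `m` by exchanging the entries `i` and `i+1`,
if this again yields a standard Young tableau, and `m` otherwise. -/
noncomputable def SYT.g {n : ℕ} (m : SYT n) (i : ℕ) : SYT n :=
  if h : ∃ h' : 0 < i ∧ i < n,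
      IsSYTFun n (m.pos ∘ Equiv.swap
        (⟨i - 1, Nat.lt_of_le_of_lt (Nat.sub_le i 1) h'.2⟩ : Fin n) ⟨i, h'.2⟩) then
    ⟨_, h.choose_spec⟩
  else m

/-- `(m, m')` is a crossing pair: for some `i` the axial distances differ and the
swaps `g_i` act on both tableaux either both nontrivially or both trivially. -/
def Crossing {n : ℕ} (m m' : SYT n) : Prop :=
  ∃ i : ℕ, 0 < i ∧ i < n ∧ m.d i ≠ m'.d i ∧
    ((|m.d i| ≠ 1 ∧ |m'.d i| ≠ 1) ∨ (|m.d i| = 1 ∧ |m'.d i| = 1))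

/-- Effect of the swap `g_i` on axial distances. -/
theorem axial_distances_of_swap (n : ℕ) (m m' : SYT n) (i : ℕ)
    (h0 : 0 < i) (hn : i < n) (hd : 2 ≤ |m.d i|)
    (hsw : m'.pos = m.pos ∘ Equiv.swap
        (⟨i - 1, Nat.lt_of_le_of_lt (Nat.sub_le i 1) hn⟩ : Fin n) ⟨i, hn⟩) :
    m'.d i = -m.d i ∧
    (1 < i → m'.d (i - 1) = m.d (i - 1) + m.d i) ∧
    (i + 1 < n → m'.d (i + 1) = m.d i + m.d (i + 1)) ∧
    ∀ j : ℕ, 2 ≤ |(j : ℤ) - (i : ℤ)| → m'.d j = m.d j := by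
  have e1 : ∀ (h1 : i - 1 < n), m'.pos ⟨i - 1, h1⟩ = m.pos ⟨i, hn⟩ := by
    intro h1
    rw [hsw]
    simp only [Function.comp_apply]
    rw [show (⟨i - 1, h1⟩ : Fin n) = ⟨i - 1, Nat.lt_of_le_of_lt (Nat.sub_le i 1) hn⟩ from rfl,
      Equiv.swap_apply_left]
  have e2 : ∀ (h1 : i < n), m'.pos ⟨i, h1⟩ = m.pos ⟨i - 1, Nat.lt_of_le_of_lt (Nat.sub_le i 1) hn⟩ := by
    intro h1
    rw [hsw]
    simp only [Function.comp_apply]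
    rw [show (⟨i, h1⟩ : Fin n) = ⟨i, hn⟩ from rfl, Equiv.swap_apply_right]
  have e3 : ∀ (k : ℕ) (hk : k < n), k ≠ i - 1 → k ≠ i → m'.pos ⟨k, hk⟩ = m.pos ⟨k, hk⟩ := by
    intro k hk hk1 hk2
    rw [hsw]
    simp only [Function.comp_apply]
    rw [Equiv.swap_apply_of_ne_of_ne]
    · simp [Fin.ext_iff]; omega
    · simp [Fin.ext_iff]; omega
  refine ⟨?_, ?_, ?_, ?_⟩
  · simp only [SYT.d, dif_pos (show 0 < i ∧ i < n from ⟨h0, hn⟩)]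
    rw [e1, e2]
    ring
  · intro hi
    have hc : 0 < i - 1 ∧ i - 1 < n := ⟨by omega, by omega⟩
    simp only [SYT.d, dif_pos hc, dif_pos (show 0 < i ∧ i < n from ⟨h0, hn⟩)]
    rw [e1, e3 (i - 1 - 1) _ (by omega) (by omega)]
    have : (⟨i - 1, Nat.lt_of_le_of_lt (Nat.sub_le i 1) hn⟩ : Fin n)
        = ⟨i - 1, hc.2⟩ := rfl
    rw [this]
    ring
  · intro hi
    have hc : 0 < i + 1 ∧ i + 1 < n := ⟨by omega, hi⟩
    simp only [SYT.d, dif_pos hc, dif_pos (show 0 < i ∧ i < n from ⟨h0, hn⟩)]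
    rw [e3 (i + 1) _ (by omega) (by omega)]
    have : (⟨i + 1 - 1, Nat.lt_of_le_of_lt (Nat.sub_le (i+1) 1) hc.2⟩ : Fin n)
        = ⟨i, hn⟩ := by simp [Fin.ext_iff]
    rw [this, e2]
    ring
  · intro j hj
    have hji : j + 2 ≤ i ∨ i + 2 ≤ j := by
      rcases le_or_gt (j : ℤ) i with h | h
      · left; rw [abs_of_nonpos (by omega)] at hj; omega
      · right; rw [abs_of_pos (by omega)] at hj; omega
    by_cases hc : 0 < j ∧ j < n
    · simp only [SYT.d, dif_pos hc]
      rw [e3 j _ (by omega) (by omega), e3 (j - 1) _ (by omega) (by omega)]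
    · simp only [SYT.d, dif_neg hc]
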